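/- Let J be the 2L×2L real matrix with block form J = [[0, -I],[I, 0]]. If Π = u uᵀ is the orthogonal projection onto a Lagrangian plane, where u is a 2L×L real matrix with uᵀu = I and uᵀJu = 0, and v₁, v₂ ∈ ℂ^{2L} are two orthonormal eigenvectors of J with J vⱼ = i σⱼ vⱼ for signs σⱼ ∈ {±1}, then (1 + σ₁σ₂) ⟨v₁, Π v₂⟩ = δ₁₂ (where δ₁₂ = 1 if v₁ = v₂ and 0 if v₁ ⊥ v₂). -/

import Mathlib

open Matrix Complex

/-- Lagrangian projection matrix-element lemma: if `Π = u uᵀ` projects onto a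
Lagrangian plane and `v₁, v₂` are orthonormal eigenvectors of `J` with
`J vⱼ = i σⱼ vⱼ`, then `(1 + σ₁σ₂) ⟨v₁, Π v₂⟩ = δ₁₂`. -/
theorem stmt0 (L : ℕ)
    (u : Matrix (Fin L ⊕ Fin L) (Fin L) ℝ)
    (hu_orth : uᵀ * u = 1)
    (hu_lag : uᵀ * Matrix.J (Fin L) ℝ * u = 0)
    (v₁ v₂ : (Fin L ⊕ Fin L) → ℂ)
    (σ₁ σ₂ : ℝ) (hσ₁ : σ₁ = 1 ∨ σ₁ = -1) (hσ₂ : σ₂ = 1 ∨ σ₂ = -1)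
    (hv₁ : (Matrix.J (Fin L) ℝ).map (Complex.ofReal) *ᵥ v₁ = (Complex.I * σ₁) • v₁)
    (hv₂ : (Matrix.J (Fin L) ℝ).map (Complex.ofReal) *ᵥ v₂ = (Complex.I * σ₂) • v₂)
    (hn₁ : star v₁ ⬝ᵥ v₁ = 1) (hn₂ : star v₂ ⬝ᵥ v₂ = 1)
    (horth : v₁ = v₂ ∨ star v₁ ⬝ᵥ v₂ = 0) :
    (1 + (σ₁ : ℂ) * σ₂) * (star v₁ ⬝ᵥ ((u * uᵀ).map (Complex.ofReal) *ᵥ v₂))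
      = if v₁ = v₂ then 1 else 0 := by
  set K := Matrix.J (Fin L) ℝ with hK
  have hKt : Kᵀ = -K := Matrix.J_transpose _ _
  have hKK : K * K = -1 := Matrix.J_squared _ _
  -- completeness relation
  have hcol : (Matrix.fromCols u (K * u))ᵀ * (Matrix.fromCols u (K * u)) = 1 := by
    rw [Matrix.transpose_fromCols, Matrix.fromRows_mul_fromCols, Matrix.transpose_mul,
      hKt]
    have hB : uᵀ * (K * u) = 0 := by rw [← Matrix.mul_assoc, hu_lag]
    have hC : uᵀ * -K * u = 0 := by
      rw [Matrix.mul_neg, Matrix.neg_mul, hu_lag, neg_zero]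
    have hD : uᵀ * -K * (K * u) = 1 := by
      have e : uᵀ * -K * (K * u) = uᵀ * (-(K * K)) * u := by
        rw [Matrix.mul_neg, Matrix.neg_mul, Matrix.mul_neg, Matrix.neg_mul]
        congr 1
        simp only [Matrix.mul_assoc]
      rw [e, hKK, neg_neg, Matrix.mul_one, hu_orth]
    rw [hu_orth, hB, hC, hD]
    exact Matrix.fromBlocks_one
  have hrow : (Matrix.fromCols u (K * u)) * (Matrix.fromCols u (K * u))ᵀ = 1 :=
    mul_eq_one_comm.mp hcol
  have hcomp : u * uᵀ + K * (u * uᵀ) * Kᵀ = 1 := by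
    rw [Matrix.transpose_fromCols, Matrix.fromCols_mul_fromRows] at hrow
    have e : K * (u * uᵀ) * Kᵀ = K * u * (K * u)ᵀ := by
      rw [Matrix.transpose_mul]
      simp only [Matrix.mul_assoc]
    rw [e]
    exact hrow
  -- move to ℂ
  set Kc : Matrix (Fin L ⊕ Fin L) (Fin L ⊕ Fin L) ℂ := K.map Complex.ofReal with hKc
  set P : Matrix (Fin L ⊕ Fin L) (Fin L ⊕ Fin L) ℂ := (u * uᵀ).map Complex.ofReal with hP
  have hcompC : P + Kc * P * Kcᵀ = 1 := by
    have h2 := congrArg (Complex.ofRealHom.mapMatrix) hcomp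
    simp only [_root_.map_add, _root_.map_mul, _root_.map_one] at h2
    simp only [RingHom.mapMatrix_apply] at h2
    have hco2 : ∀ {m n : Type} (A : Matrix m n ℝ),
        A.map (Complex.ofRealHom : ℝ → ℂ) = A.map Complex.ofReal := fun A => rfl
    rw [hco2, hco2, hco2, Matrix.transpose_map] at h2
    exact h2
  have hKct : Kcᵀ = -Kc := by
    rw [hKc, ← Matrix.transpose_map, hKt]; ext i j; simp
  -- Kc commutes with star on vectors
  have hstar : ∀ w : (Fin L ⊕ Fin L) → ℂ, Kc *ᵥ star w = star (Kc *ᵥ w) := by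
    intro w
    ext i
    simp [Matrix.mulVec, dotProduct, hKc, map_sum, Complex.conj_ofReal]
  have hvm : star v₁ ᵥ* Kc = (Complex.I * σ₁) • star v₁ := by
    have e1 : Kc *ᵥ star v₁ = (-(Complex.I * σ₁)) • star v₁ := by
      rw [hstar, hv₁, star_smul]
      congr 1
      simp [Complex.conj_ofReal]
    have e2 : Kc = -Kcᵀ := by rw [hKct, neg_neg]
    rw [e2, Matrix.vecMul_neg, Matrix.vecMul_transpose, e1, neg_smul, neg_neg]
  have hq : star v₁ ⬝ᵥ ((Kc * P * Kcᵀ) *ᵥ v₂)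
      = ((σ₁ : ℂ) * σ₂) * (star v₁ ⬝ᵥ (P *ᵥ v₂)) := by
    rw [hKct]
    rw [← Matrix.mulVec_mulVec, ← Matrix.mulVec_mulVec]
    rw [Matrix.neg_mulVec, hv₂]
    rw [Matrix.dotProduct_mulVec, hvm]
    rw [Matrix.mulVec_neg, Matrix.mulVec_smul]
    simp only [dotProduct_neg, dotProduct_smul, smul_dotProduct]
    simp only [smul_eq_mul]
    linear_combination (-(σ₁ : ℂ) * σ₂ * (star v₁ ⬝ᵥ (P *ᵥ v₂))) * Complex.I_sq
  have hkey : star v₁ ⬝ᵥ v₂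
      = (1 + (σ₁ : ℂ) * σ₂) * (star v₁ ⬝ᵥ (P *ᵥ v₂)) := by
    conv_lhs => rw [show v₂ = (P + Kc * P * Kcᵀ) *ᵥ v₂ by rw [hcompC, Matrix.one_mulVec]]
    rw [Matrix.add_mulVec, dotProduct_add, hq]
    ring
  rcases horth with h | h
  · subst h
    rw [← hkey, hn₁]
    simp
  · rw [if_neg, ← hkey, h]
    rintro rfl
    rw [hn₁] at h
    exact one_ne_zero h
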